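/- arXiv:1702.00857 — 2 statements merged into one kernel-verified Lean document; each statement's English description precedes it below -/
import Mathlib

section
/- Under Assumption A1 at every point of the set where it is finite, the discounted value function V_α : Y → ℝ ∪ {+∞}, V_α(y) := inf over admissible processes from y of Σ_{t=0}^∞ α^t g(y(t),u(t)) (with α ∈ (0,1)), is lower semicontinuous on Y. -/
open MeasureTheory Filter Topology Set ENNReal

noncomputable section

namespace LPOC

/-- The state space `ℝ^m`. -/
abbrev E (m : ℕ) := EuclideanSpace ℝ (Fin m)

variable {m : ℕ} {U0 : Type*} [MetricSpace U0]

/-- Upper semicontinuity of a compact-valued set-valued map at points of `Y`. -/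
def UscOn (Y : Set (E m)) (A : E m → Set U0) : Prop :=
  ∀ y ∈ Y, ∀ V : Set U0, IsOpen V → A y ⊆ V →
    ∃ O : Set (E m), IsOpen O ∧ y ∈ O ∧ ∀ y' ∈ O ∩ Y, A y' ⊆ V

/-- `A(y) := {u ∈ U(y) : f(y,u) ∈ Y}`. -/
def Amap (Y : Set (E m)) (U : E m → Set U0) (f : E m × U0 → E m) (y : E m) : Set U0 :=
  {u ∈ U y | f (y, u) ∈ Y}

/-- `G := {(y,u) : y ∈ Y, u ∈ U(y), f(y,u) ∈ Y}`, the graph of `A`. -/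
def graphG (Y : Set (E m)) (U : E m → Set U0) (f : E m × U0 → E m) : Set (E m × U0) :=
  {p | p.1 ∈ Y ∧ p.2 ∈ U p.1 ∧ f p ∈ Y}

/-- An admissible process `(y(·),u(·))` from `y0` on the infinite horizon. -/
def AdmProc (Y : Set (E m)) (U : E m → Set U0) (f : E m × U0 → E m)
    (y0 : E m) (y : ℕ → E m) (u : ℕ → U0) : Prop :=
  y 0 = y0 ∧ ∀ t : ℕ, y (t + 1) = f (y t, u t) ∧ y t ∈ Y ∧ u t ∈ U (y t)

/-- An admissible process from `y0` on the finite horizon `{0, ..., S-1}`. -/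
def AdmProcH (Y : Set (E m)) (U : E m → Set U0) (f : E m × U0 → E m)
    (S : ℕ) (y0 : E m) (y : ℕ → E m) (u : ℕ → U0) : Prop :=
  y 0 = y0 ∧ (∀ t < S, y (t + 1) = f (y t, u t) ∧ y t ∈ Y ∧ u t ∈ U (y t)) ∧ y S ∈ Y

/-- The discounted cost `Σ_{t=0}^∞ α^t g(y(t),u(t))`. -/
def discountedCost (g : E m × U0 → ℝ) (α : ℝ) (y : ℕ → E m) (u : ℕ → U0) : ℝ :=
  ∑' t : ℕ, α ^ t * g (y t, u t)

/-- The discounted value function `V_α` (real-valued version). -/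
def Valpha (Y : Set (E m)) (U : E m → Set U0) (f : E m × U0 → E m) (g : E m × U0 → ℝ)
    (α : ℝ) (y0 : E m) : ℝ :=
  sInf {r : ℝ | ∃ y u, AdmProc Y U f y0 y u ∧ r = discountedCost g α y u}

/-- The discounted value function `V_α` with values in `ℝ ∪ {±∞}` (equal to `+∞` when no
admissible process exists). -/
def ValphaE (Y : Set (E m)) (U : E m → Set U0) (f : E m × U0 → E m) (g : E m × U0 → ℝ)
    (α : ℝ) (y0 : E m) : EReal :=
  sInf {r : EReal | ∃ y u, AdmProc Y U f y0 y u ∧ r = ((discountedCost g α y u : ℝ) : EReal)}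

/-- The finite-horizon value function `V(S, y0)`. -/
def Vfin (Y : Set (E m)) (U : E m → Set U0) (f : E m × U0 → E m) (g : E m × U0 → ℝ)
    (S : ℕ) (y0 : E m) : ℝ :=
  sInf {r : ℝ | ∃ y u, AdmProcH Y U f S y0 y u ∧ r = ∑ t ∈ Finset.range S, g (y t, u t)}

variable [MeasurableSpace U0] [BorelSpace U0]

/-- The discounted occupational measure `γ^α` generated by a process, i.e. the measure with
`γ^α(Q) = (1-α) Σ_{t=0}^∞ α^t 1_Q(y(t),u(t))`. -/
def discOcc (α : ℝ) (y : ℕ → E m) (u : ℕ → U0) : Measure (E m × U0) :=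
  Measure.sum fun t : ℕ => (ENNReal.ofReal ((1 - α) * α ^ t)) • Measure.dirac (y t, u t)

/-- The occupational measure over `{0,...,S-1}` generated by a process, i.e. the measure with
`γ_S(Q) = (1/S) Σ_{t=0}^{S-1} 1_Q(y(t),u(t))`. -/
def occS (S : ℕ) (y : ℕ → E m) (u : ℕ → U0) : Measure (E m × U0) :=
  ((S : ℝ≥0∞))⁻¹ • ∑ t ∈ Finset.range S, Measure.dirac (y t, u t)

/-- `Γ_α(y0)`: the set of discounted occupational measures of admissible processes from `y0`. -/
def GammaA (Y : Set (E m)) (U : E m → Set U0) (f : E m × U0 → E m) (α : ℝ) (y0 : E m) :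
    Set (ProbabilityMeasure (E m × U0)) :=
  {γ | ∃ y u, AdmProc Y U f y0 y u ∧ (γ : Measure (E m × U0)) = discOcc α y u}

/-- `Γ_α := ∪_{y0 ∈ Y} Γ_α(y0)`. -/
def GammaAall (Y : Set (E m)) (U : E m → Set U0) (f : E m × U0 → E m) (α : ℝ) :
    Set (ProbabilityMeasure (E m × U0)) :=
  ⋃ y0 ∈ Y, GammaA Y U f α y0

/-- `Γ(S)`: the set of occupational measures over `{0,...,S-1}` of admissible processes on
horizon `S`, over all initial conditions in `Y`. -/
def GammaSset (Y : Set (E m)) (U : E m → Set U0) (f : E m × U0 → E m) (S : ℕ) :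
    Set (ProbabilityMeasure (E m × U0)) :=
  {γ | ∃ y0 ∈ Y, ∃ y u, AdmProcH Y U f S y0 y u ∧ (γ : Measure (E m × U0)) = occS S y u}

/-- `W_α(y0)`: probability measures `γ` concentrated on `G` such that
`∫_G [α(φ(f(y,u))-φ(y)) + (1-α)(φ(y0)-φ(y))] dγ = 0` for all continuous `φ : Y → ℝ`. -/
def Wa (Y : Set (E m)) (U : E m → Set U0) (f : E m × U0 → E m) (α : ℝ) (y0 : E m) :
    Set (ProbabilityMeasure (E m × U0)) :=
  {γ | (γ : Measure (E m × U0)) (graphG Y U f)ᶜ = 0 ∧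
    ∀ φ : E m → ℝ, ContinuousOn φ Y →
      ∫ p, (α * (φ (f p) - φ p.1) + (1 - α) * (φ y0 - φ p.1))
        ∂(γ : Measure (E m × U0)) = 0}

/-- `W`: probability measures `γ` concentrated on `G` such that
`∫_G (φ(f(y,u))-φ(y)) dγ = 0` for all continuous `φ : Y → ℝ`. -/
def Wset (Y : Set (E m)) (U : E m → Set U0) (f : E m × U0 → E m) :
    Set (ProbabilityMeasure (E m × U0)) :=
  {γ | (γ : Measure (E m × U0)) (graphG Y U f)ᶜ = 0 ∧
    ∀ φ : E m → ℝ, ContinuousOn φ Y →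
      ∫ p, (φ (f p) - φ p.1) ∂(γ : Measure (E m × U0)) = 0}

/-- `g*_α(y0)`: the optimal value of the IDLP problem over `W_α(y0)`. -/
def gStarA (Y : Set (E m)) (U : E m → Set U0) (f : E m × U0 → E m) (g : E m × U0 → ℝ)
    (α : ℝ) (y0 : E m) : ℝ :=
  sInf {r : ℝ | ∃ γ ∈ Wa Y U f α y0, r = ∫ p, g p ∂(γ : Measure (E m × U0))}

/-- `g*`: the optimal value of the IDLP problem over `W`. -/
def gStar (Y : Set (E m)) (U : E m → Set U0) (f : E m × U0 → E m) (g : E m × U0 → ℝ) : ℝ :=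
  sInf {r : ℝ | ∃ γ ∈ Wset Y U f, r = ∫ p, g p ∂(γ : Measure (E m × U0))}

/-- Membership in the class `LS` of bounded lower semicontinuous functions `Y → ℝ`. -/
def BddLscOn (Y : Set (E m)) (ψ : E m → ℝ) : Prop :=
  LowerSemicontinuousOn ψ Y ∧ ∃ C : ℝ, ∀ y ∈ Y, |ψ y| ≤ C

/-- The inner infimum in the max-min problem (discounted case):
`inf_{(y,u) ∈ G} { g(y,u) + α(ψ(f(y,u))-ψ(y)) + (1-α)(ψ(y0)-ψ(y)) }`. -/
def muA (Y : Set (E m)) (U : E m → Set U0) (f : E m × U0 → E m) (g : E m × U0 → ℝ)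
    (α : ℝ) (y0 : E m) (ψ : E m → ℝ) : ℝ :=
  sInf {s : ℝ | ∃ p ∈ graphG Y U f,
    s = g p + α * (ψ (f p) - ψ p.1) + (1 - α) * (ψ y0 - ψ p.1)}

/-- `μ*_α(y0) := sup_{ψ ∈ LS} inf_{(y,u) ∈ G} {...}`. -/
def muStarA (Y : Set (E m)) (U : E m → Set U0) (f : E m × U0 → E m) (g : E m × U0 → ℝ)
    (α : ℝ) (y0 : E m) : ℝ :=
  sSup {r : ℝ | ∃ ψ : E m → ℝ, BddLscOn Y ψ ∧ r = muA Y U f g α y0 ψ}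

/-- The inner infimum in the max-min problem (average case):
`inf_{(y,u) ∈ G} { g(y,u) + ψ(f(y,u)) - ψ(y) }`. -/
def muBar (Y : Set (E m)) (U : E m → Set U0) (f : E m × U0 → E m) (g : E m × U0 → ℝ)
    (ψ : E m → ℝ) : ℝ :=
  sInf {s : ℝ | ∃ p ∈ graphG Y U f, s = g p + ψ (f p) - ψ p.1}

/-- `μ* := sup_{ψ ∈ LS} inf_{(y,u) ∈ G} { g(y,u) + ψ(f(y,u)) - ψ(y) }`. -/
def muStar (Y : Set (E m)) (U : E m → Set U0) (f : E m × U0 → E m) (g : E m × U0 → ℝ) : ℝ :=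
  sSup {r : ℝ | ∃ ψ : E m → ℝ, BddLscOn Y ψ ∧ r = muBar Y U f g ψ}

/-- The convex hull of a set of probability measures: all finite convex combinations. -/
def convCombos {X : Type*} [MeasurableSpace X] (Γ : Set (ProbabilityMeasure X)) :
    Set (ProbabilityMeasure X) :=
  {γ | ∃ (n : ℕ) (w : Fin n → ℝ) (μs : Fin n → ProbabilityMeasure X),
    (∀ i, 0 ≤ w i) ∧ (∑ i, w i) = 1 ∧ (∀ i, μs i ∈ Γ) ∧
    (γ : Measure X) = ∑ i, ENNReal.ofReal (w i) • (μs i : Measure X)}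

/-- The graph of a usc compact-valued map over a compact set is closed. -/
lemma graph_closed_aux {m : ℕ} {U0 : Type*} [MetricSpace U0]
    (Y : Set (E m)) (hYc : IsCompact Y)
    (U : E m → Set U0) (hUusc : UscOn Y U) (hUcomp : ∀ y ∈ Y, IsCompact (U y)) :
    IsClosed {p : E m × U0 | p.1 ∈ Y ∧ p.2 ∈ U p.1} := by
  apply IsSeqClosed.isClosed
  intro x p hx hlim
  have h1 : Tendsto (fun n => (x n).1) atTop (𝓝 p.1) := (continuous_fst.tendsto p).comp hlim
  have h2 : Tendsto (fun n => (x n).2) atTop (𝓝 p.2) := (continuous_snd.tendsto p).comp hlim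
  have hpY : p.1 ∈ Y :=
    hYc.isClosed.mem_of_tendsto h1 (Eventually.of_forall fun n => (hx n).1)
  refine ⟨hpY, ?_⟩
  by_contra hpU
  rcases (U p.1).eq_empty_or_nonempty with hemp | hne
  · obtain ⟨O, hO, hpO, hOV⟩ := hUusc p.1 hpY ∅ isOpen_empty (by simp [hemp])
    have hev : ∀ᶠ n in atTop, (x n).1 ∈ O := h1.eventually (eventually_mem_nhds_iff.2 (hO.mem_nhds hpO)) |>.mono fun n hn => mem_of_mem_nhds hn
    rcases hev.exists with ⟨n, hn⟩
    exact hOV _ ⟨hn, (hx n).1⟩ (hx n).2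
  · set δ := Metric.infDist p.2 (U p.1) with hδdef
    have hδ : 0 < δ := ((hUcomp p.1 hpY).isClosed.notMem_iff_infDist_pos hne).1 hpU
    set V : Set U0 := {v | Metric.infDist v (U p.1) < δ / 2} with hVdef
    have hVopen : IsOpen V :=
      isOpen_lt (Metric.continuous_infDist_pt (U p.1)) continuous_const
    have hUV : U p.1 ⊆ V := fun v hv => by
      simp only [hVdef, mem_setOf_eq, Metric.infDist_zero_of_mem hv]
      linarith
    obtain ⟨O, hO, hpO, hOV⟩ := hUusc p.1 hpY V hVopen hUV
    have hev1 : ∀ᶠ n in atTop, (x n).1 ∈ O := h1.eventually (eventually_mem_nhds_iff.2 (hO.mem_nhds hpO)) |>.mono fun n hn => mem_of_mem_nhds hn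
    have h3 : Tendsto (fun n => Metric.infDist (x n).2 (U p.1)) atTop (𝓝 δ) :=
      ((Metric.continuous_infDist_pt (U p.1)).tendsto p.2).comp h2
    have hev2 : ∀ᶠ n in atTop, δ / 2 < Metric.infDist (x n).2 (U p.1) :=
      h3.eventually_const_lt (by linarith)
    rcases (hev1.and hev2).exists with ⟨n, hn1, hn2⟩
    have : (x n).2 ∈ V := hOV _ ⟨hn1, (hx n).1⟩ (hx n).2
    simp only [hVdef, mem_setOf_eq] at this
    linarith

theorem stmt1 {m : ℕ} {U0 : Type*} [MetricSpace U0] [CompactSpace U0]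
    [MeasurableSpace U0] [BorelSpace U0]
    (Y : Set (E m)) (hYne : Y.Nonempty) (hYc : IsCompact Y)
    (U : E m → Set U0) (hUusc : UscOn Y U) (hUcomp : ∀ y ∈ Y, IsCompact (U y))
    (f : E m × U0 → E m) (hf : Continuous f)
    (g : E m × U0 → ℝ) (hg : Continuous g)
    (α : ℝ) (hα : α ∈ Set.Ioo (0:ℝ) 1)
    (hA1 : ∀ y ∈ Y, ValphaE Y U f g α y < ⊤ → ∃ yy uu, AdmProc Y U f y yy uu) :
    LowerSemicontinuousOn (fun y => ValphaE Y U f g α y) Y := by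
  classical
  rcases isEmpty_or_nonempty U0 with hEmp | hNe
  · -- no controls at all: the value function is identically `⊤`
    have hV : ∀ y0 : E m, ValphaE Y U f g α y0 = (⊤ : EReal) := by
      intro y0
      have hset : {r : EReal | ∃ y u, AdmProc Y U f y0 y u ∧
          r = ((discountedCost g α y u : ℝ) : EReal)} = ∅ := by
        ext r
        simp only [mem_setOf_eq, mem_empty_iff_false, iff_false]
        rintro ⟨y, u, -, -⟩
        exact (hEmp.false (u 0))
      rw [ValphaE, hset, sInf_empty]
    intro y0 _ c hc
    filter_upwards with y'
    simpa [hV y'] using (lt_of_lt_of_le hc (by simp [hV y0]))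
  · -- main case
    obtain ⟨M, hM⟩ : ∃ M, ∀ p ∈ Y ×ˢ (univ : Set U0), ‖g p‖ ≤ M :=
      (hYc.prod isCompact_univ).exists_bound_of_continuousOn hg.continuousOn
    intro y0 hy0 c hc
    by_contra hcon
    rw [Filter.not_eventually] at hcon
    have hcon' : ∃ᶠ y in 𝓝[Y] y0, ValphaE Y U f g α y ≤ c :=
      hcon.mono fun y h => not_lt.1 h
    simp only at hc
    obtain ⟨c', hcc', hc'V⟩ := exists_between hc
    have hc'bot : c' ≠ ⊥ := (bot_le.trans_lt hcc').ne'
    have hc'top : c' ≠ ⊤ := (hc'V.trans_le le_top).ne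
    lift c' to ℝ using ⟨hc'top, hc'bot⟩ with r hr
    -- selection of almost-optimal processes
    have hsel : ∀ y : E m, ValphaE Y U f g α y ≤ c →
        ∃ yy uu, AdmProc Y U f y yy uu ∧ discountedCost g α yy uu < r := by
      intro y hy
      have hlt : ValphaE Y U f g α y < ((r : ℝ) : EReal) := lt_of_le_of_lt hy hcc'
      rw [ValphaE] at hlt
      obtain ⟨x, hxS, hxr⟩ := sInf_lt_iff.1 hlt
      obtain ⟨yy, uu, hadm, rfl⟩ := hxS
      exact ⟨yy, uu, hadm, by exact_mod_cast hxr⟩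
    choose! yy uu hspec using hsel
    -- the ultrafilter along which values stay ≤ c
    have hneBot : (𝓝[Y] y0 ⊓ 𝓟 {y | ValphaE Y U f g α y ≤ c}).NeBot :=
      Filter.frequently_iff_neBot.1 hcon'
    set L := 𝓝[Y] y0 ⊓ 𝓟 {y | ValphaE Y U f g α y ≤ c} with hLdef
    let F : Ultrafilter (E m) := Ultrafilter.of L
    have hFL : (F : Filter (E m)) ≤ L := Ultrafilter.of_le L
    have hFT : ∀ᶠ y in (F : Filter (E m)), ValphaE Y U f g α y ≤ c :=
      hFL (mem_inf_of_right (mem_principal_self _))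
    have hFy0 : Tendsto (fun y : E m => y) (F : Filter (E m)) (𝓝 y0) :=
      tendsto_id'.2 (hFL.trans (inf_le_left.trans nhdsWithin_le_nhds))
    -- compactness of the space of trajectories
    set K : Set (ℕ → E m × U0) := Set.pi univ (fun _ => Y ×ˢ (univ : Set U0)) with hKdef
    have hK : IsCompact K := isCompact_univ_pi fun _ => hYc.prod isCompact_univ
    set W : E m → (ℕ → E m × U0) := fun y t => (yy y t, uu y t) with hWdef
    have hWK : ∀ᶠ y in (F : Filter (E m)), W y ∈ K := by
      filter_upwards [hFT] with y hy
      intro t _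
      exact ⟨((hspec y hy).1.2 t).2.1, mem_univ _⟩
    obtain ⟨w, hwK, hlim⟩ := hK.ultrafilter_le_nhds (Ultrafilter.map W F)
      (by rw [Ultrafilter.coe_map, le_principal_iff, mem_map]; exact hWK)
    have hlimT : Tendsto W (F : Filter (E m)) (𝓝 w) := by
      rwa [Ultrafilter.coe_map] at hlim
    have hco : ∀ t : ℕ, Tendsto (fun y => W y t) (F : Filter (E m)) (𝓝 (w t)) :=
      fun t => ((continuous_apply t).tendsto w).comp hlimT
    have h1 : ∀ t : ℕ, Tendsto (fun y => yy y t) (F : Filter (E m)) (𝓝 (w t).1) :=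
      fun t => (continuous_fst.tendsto (w t)).comp (hco t)
    have h2 : ∀ t : ℕ, Tendsto (fun y => uu y t) (F : Filter (E m)) (𝓝 (w t).2) :=
      fun t => (continuous_snd.tendsto (w t)).comp (hco t)
    set ys : ℕ → E m := fun t => (w t).1 with hysdef
    set us : ℕ → U0 := fun t => (w t).2 with husdef
    -- the limit process is admissible from y0
    have hys0 : ys 0 = y0 := by
      have ha : Tendsto (fun y => yy y 0) (F : Filter (E m)) (𝓝 y0) :=
        hFy0.congr' (hFT.mono fun y hy => ((hspec y hy).1.1).symm)
      exact tendsto_nhds_unique (h1 0) ha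
    have hGr : IsClosed {p : E m × U0 | p.1 ∈ Y ∧ p.2 ∈ U p.1} :=
      graph_closed_aux Y hYc U hUusc hUcomp
    have hadm : AdmProc Y U f y0 ys us := by
      refine ⟨hys0, fun t => ⟨?_, (hwK t (mem_univ t)).1, ?_⟩⟩
      · have hb : Tendsto (fun y => f (yy y t, uu y t)) (F : Filter (E m))
            (𝓝 (f (ys t, us t))) :=
          (hf.tendsto _).comp ((h1 t).prodMk_nhds (h2 t))
        have ha : Tendsto (fun y => yy y (t + 1)) (F : Filter (E m))
            (𝓝 (f (ys t, us t))) :=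
          hb.congr' (hFT.mono fun y hy => (((hspec y hy).1.2 t).1).symm)
        exact tendsto_nhds_unique (h1 (t + 1)) ha
      · have hmem : w t ∈ {p : E m × U0 | p.1 ∈ Y ∧ p.2 ∈ U p.1} := by
          refine hGr.mem_of_tendsto (hco t) ?_
          filter_upwards [hFT] with y hy
          exact ⟨((hspec y hy).1.2 t).2.1, ((hspec y hy).1.2 t).2.2⟩
        exact hmem.2
    -- convergence of the discounted costs
    have hcost : Tendsto (fun y => discountedCost g α (yy y) (uu y)) (F : Filter (E m))
        (𝓝 (discountedCost g α ys us)) := by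
      have hsum : Summable (fun t : ℕ => M * α ^ t) :=
        (summable_geometric_of_lt_one hα.1.le hα.2).mul_left M
      refine tendsto_tsum_of_dominated_convergence hsum ?_ ?_
      · intro t
        exact tendsto_const_nhds.mul
          ((hg.tendsto _).comp ((h1 t).prodMk_nhds (h2 t)))
      · filter_upwards [hFT] with y hy
        intro t
        have hYt : yy y t ∈ Y := ((hspec y hy).1.2 t).2.1
        have hgb : ‖g (yy y t, uu y t)‖ ≤ M := hM _ ⟨hYt, mem_univ _⟩
        have hαt : (0:ℝ) ≤ α ^ t := pow_nonneg hα.1.le t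
        calc ‖α ^ t * g (yy y t, uu y t)‖ = α ^ t * ‖g (yy y t, uu y t)‖ := by
              rw [norm_mul, Real.norm_of_nonneg hαt]
          _ ≤ α ^ t * M := by
              exact mul_le_mul_of_nonneg_left hgb hαt
          _ = M * α ^ t := mul_comm _ _
    have hle : discountedCost g α ys us ≤ r :=
      le_of_tendsto hcost (hFT.mono fun y hy => ((hspec y hy).2).le)
    -- conclusion
    have hmem : ((discountedCost g α ys us : ℝ) : EReal) ∈
        {r : EReal | ∃ y u, AdmProc Y U f y0 y u ∧
          r = ((discountedCost g α y u : ℝ) : EReal)} := ⟨ys, us, hadm, rfl⟩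
    have hfinal : ValphaE Y U f g α y0 ≤ ((r : ℝ) : EReal) :=
      (sInf_le hmem).trans (by exact_mod_cast hle)
    exact absurd hfinal (not_le.2 hc'V)

end LPOC
end
end

section
/- Under Assumption A2, for every α ∈ (0,1) and every y0 ∈ Y: the optimal value μ*_α(y0) of the max–min problem, the optimal value g*_α(y0) of the infinite-dimensional LP problem, and (1−α)V_α(y0) all coincide: μ*_α(y0) = g*_α(y0) = (1−α)V_α(y0). Moreover, the supremum defining μ*_α(y0) is attained at ψ = V_α. -/
open MeasureTheory Filter Topology Set ENNReal

noncomputable section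

namespace LPOC

variable {m : ℕ} {U0 : Type*} [MetricSpace U0]

variable [MeasurableSpace U0] [BorelSpace U0]

set_option linter.unusedSectionVars false


variable {Y : Set (E m)} {U : E m → Set U0} {f : E m × U0 → E m} {g : E m × U0 → ℝ} {α : ℝ}

def costSet (Y : Set (E m)) (U : E m → Set U0) (f : E m × U0 → E m) (g : E m × U0 → ℝ)
    (α : ℝ) (y0 : E m) : Set ℝ :=
  {r : ℝ | ∃ y u, AdmProc Y U f y0 y u ∧ r = discountedCost g α y u}

lemma Valpha_eq_sInf (y0 : E m) : Valpha Y U f g α y0 = sInf (costSet Y U f g α y0) := rfl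

lemma exists_gbound [CompactSpace U0] (hYc : IsCompact Y) (hg : Continuous g) :
    ∃ M : ℝ, 0 ≤ M ∧ ∀ p : E m × U0, p.1 ∈ Y → |g p| ≤ M := by
  obtain ⟨C, hC⟩ := (hYc.prod isCompact_univ).exists_bound_of_continuousOn hg.continuousOn
  refine ⟨max C 0, le_max_right _ _, fun p hp => ?_⟩
  have := hC p ⟨hp, mem_univ _⟩
  rw [Real.norm_eq_abs] at this
  exact this.trans (le_max_left _ _)

lemma exists_adm (hA2 : ∀ y ∈ Y, (Amap Y U f y).Nonempty) {y0 : E m} (hy0 : y0 ∈ Y) :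
    ∃ y u, AdmProc Y U f y0 y u := by
  haveI : Nonempty U0 := ⟨(hA2 y0 hy0).some⟩
  have hsel : ∀ y : E m, ∃ u : U0, y ∈ Y → u ∈ Amap Y U f y := by
    intro y
    by_cases hy : y ∈ Y
    · exact ⟨(hA2 y hy).some, fun _ => (hA2 y hy).some_mem⟩
    · exact ⟨Classical.arbitrary U0, fun h => absurd h hy⟩
  choose σ hσ using hsel
  refine ⟨fun t => Nat.rec y0 (fun _ yt => f (yt, σ yt)) t, fun t =>
    σ (Nat.rec y0 (fun _ yt => f (yt, σ yt)) t), rfl, fun t => ?_⟩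
  have hmem : ∀ s : ℕ, (Nat.rec y0 (fun _ yt => f (yt, σ yt)) s : E m) ∈ Y := by
    intro s
    induction s with
    | zero => exact hy0
    | succ s ih => exact (hσ _ ih).2
  exact ⟨rfl, hmem t, (hσ _ (hmem t)).1⟩

lemma summable_cost (hα : α ∈ Set.Ioo (0:ℝ) 1) {M : ℝ}
    (hM : ∀ p : E m × U0, p.1 ∈ Y → |g p| ≤ M)
    {y : ℕ → E m} {u : ℕ → U0} (hy : ∀ t, y t ∈ Y) :
    Summable (fun t : ℕ => α ^ t * g (y t, u t)) := by
  have hs : Summable (fun t : ℕ => M * α ^ t) :=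
    (summable_geometric_of_lt_one hα.1.le hα.2).mul_left M
  refine hs.of_norm_bounded (fun t => ?_)
  rw [Real.norm_eq_abs, abs_mul, abs_pow, abs_of_pos hα.1, mul_comm]
  exact mul_le_mul_of_nonneg_right (hM (y t, u t) (hy t)) (pow_nonneg hα.1.le t)

lemma cost_abs_le (hα : α ∈ Set.Ioo (0:ℝ) 1) {M : ℝ}
    (hM : ∀ p : E m × U0, p.1 ∈ Y → |g p| ≤ M)
    {y : ℕ → E m} {u : ℕ → U0} (hy : ∀ t, y t ∈ Y) :
    |discountedCost g α y u| ≤ M * (1 - α)⁻¹ := by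
  have hs := summable_cost hα hM (u := u) hy
  have habs : Summable (fun t : ℕ => |α ^ t * g (y t, u t)|) := hs.abs
  have hgeo : Summable (fun t : ℕ => M * α ^ t) :=
    (summable_geometric_of_lt_one hα.1.le hα.2).mul_left M
  calc |discountedCost g α y u| ≤ ∑' t : ℕ, |α ^ t * g (y t, u t)| := by
        rw [discountedCost]
        simpa only [Real.norm_eq_abs] using norm_tsum_le_tsum_norm (f := fun t : ℕ => α ^ t * g (y t, u t)) (by simpa only [Real.norm_eq_abs] using habs)
  _ ≤ ∑' t : ℕ, M * α ^ t := by
        refine Summable.tsum_le_tsum (fun t => ?_) habs hgeo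
        rw [abs_mul, abs_pow, abs_of_pos hα.1, mul_comm]
        exact mul_le_mul_of_nonneg_right (hM (y t, u t) (hy t)) (pow_nonneg hα.1.le t)
  _ = M * (1 - α)⁻¹ := by
        rw [tsum_mul_left, tsum_geometric_of_lt_one hα.1.le hα.2]

lemma costSet_nonempty (hA2 : ∀ y ∈ Y, (Amap Y U f y).Nonempty) {y0 : E m} (hy0 : y0 ∈ Y) :
    (costSet Y U f g α y0).Nonempty := by
  obtain ⟨y, u, h⟩ := exists_adm hA2 hy0
  exact ⟨_, y, u, h, rfl⟩

lemma costSet_abs_le (hα : α ∈ Set.Ioo (0:ℝ) 1) {M : ℝ}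
    (hM : ∀ p : E m × U0, p.1 ∈ Y → |g p| ≤ M) {y0 : E m}
    {r : ℝ} (hr : r ∈ costSet Y U f g α y0) : |r| ≤ M * (1 - α)⁻¹ := by
  obtain ⟨y, u, hadm, rfl⟩ := hr
  exact cost_abs_le hα hM (fun t => (hadm.2 t).2.1)

lemma costSet_bddBelow (hα : α ∈ Set.Ioo (0:ℝ) 1) {M : ℝ}
    (hM : ∀ p : E m × U0, p.1 ∈ Y → |g p| ≤ M) {y0 : E m} :
    BddBelow (costSet Y U f g α y0) :=
  ⟨-(M * (1 - α)⁻¹), fun r hr => neg_le_of_abs_le (costSet_abs_le hα hM hr)⟩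

lemma Valpha_abs_le (hα : α ∈ Set.Ioo (0:ℝ) 1) {M : ℝ}
    (hM : ∀ p : E m × U0, p.1 ∈ Y → |g p| ≤ M)
    (hA2 : ∀ y ∈ Y, (Amap Y U f y).Nonempty) {y0 : E m} (hy0 : y0 ∈ Y) :
    |Valpha Y U f g α y0| ≤ M * (1 - α)⁻¹ := by
  obtain ⟨r, hr⟩ := costSet_nonempty (g := g) (α := α) hA2 hy0
  rw [abs_le]
  constructor
  · rw [Valpha_eq_sInf]
    exact le_csInf ⟨r, hr⟩ (fun b hb => neg_le_of_abs_le (costSet_abs_le hα hM hb))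
  · rw [Valpha_eq_sInf]
    exact (csInf_le (costSet_bddBelow hα hM) hr).trans (le_of_abs_le (costSet_abs_le hα hM hr))

lemma Valpha_le (hα : α ∈ Set.Ioo (0:ℝ) 1) {M : ℝ}
    (hM : ∀ p : E m × U0, p.1 ∈ Y → |g p| ≤ M) {y0 : E m}
    {r : ℝ} (hr : r ∈ costSet Y U f g α y0) : Valpha Y U f g α y0 ≤ r :=
  csInf_le (costSet_bddBelow hα hM) hr

lemma adm_tail {y0 : E m} {y : ℕ → E m} {u : ℕ → U0} (h : AdmProc Y U f y0 y u) :
    AdmProc Y U f (y 1) (fun t => y (t + 1)) (fun t => u (t + 1)) :=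
  ⟨rfl, fun t => (h.2 (t + 1))⟩

lemma cost_decomp (hα : α ∈ Set.Ioo (0:ℝ) 1) {M : ℝ}
    (hM : ∀ p : E m × U0, p.1 ∈ Y → |g p| ≤ M)
    {y : ℕ → E m} {u : ℕ → U0} (hy : ∀ t, y t ∈ Y) :
    discountedCost g α y u
      = g (y 0, u 0) + α * discountedCost g α (fun t => y (t + 1)) (fun t => u (t + 1)) := by
  have hs := summable_cost hα hM (u := u) hy
  rw [discountedCost, Summable.tsum_eq_zero_add hs]
  simp only [pow_zero, one_mul, discountedCost]
  congr 1
  rw [← tsum_mul_left]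
  congr 1 with t
  ring

lemma adm_prepend {y0 : E m} {u0 : U0} (hy0 : y0 ∈ Y) (hu0 : u0 ∈ Amap Y U f y0)
    {y : ℕ → E m} {u : ℕ → U0} (h : AdmProc Y U f (f (y0, u0)) y u) :
    AdmProc Y U f y0 (fun t => Nat.casesOn t y0 y) (fun t => Nat.casesOn t u0 u) := by
  refine ⟨rfl, fun t => ?_⟩
  cases t with
  | zero => exact ⟨h.1, hy0, hu0.1⟩
  | succ t => exact (h.2 t)

lemma bellman_le (hα : α ∈ Set.Ioo (0:ℝ) 1) {M : ℝ}
    (hM : ∀ p : E m × U0, p.1 ∈ Y → |g p| ≤ M)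
    (hA2 : ∀ y ∈ Y, (Amap Y U f y).Nonempty)
    {y0 : E m} {u0 : U0} (hy0 : y0 ∈ Y) (hu0 : u0 ∈ Amap Y U f y0) :
    Valpha Y U f g α y0 ≤ g (y0, u0) + α * Valpha Y U f g α (f (y0, u0)) := by
  have hy1 : f (y0, u0) ∈ Y := hu0.2
  have key : ∀ r ∈ costSet Y U f g α (f (y0, u0)),
      Valpha Y U f g α y0 ≤ g (y0, u0) + α * r := by
    rintro r ⟨y, u, hadm, rfl⟩
    have hadm' := adm_prepend hy0 hu0 hadm
    have hy' : ∀ t, (fun t => Nat.casesOn t y0 y : ℕ → E m) t ∈ Y := fun t =>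
      (hadm'.2 t).2.1
    have hc := cost_decomp hα hM (u := fun t => Nat.casesOn t u0 u) hy'
    have : discountedCost g α (fun t => Nat.casesOn t y0 y) (fun t => Nat.casesOn t u0 u)
        = g (y0, u0) + α * discountedCost g α y u := hc
    calc Valpha Y U f g α y0
        ≤ discountedCost g α (fun t => Nat.casesOn t y0 y) (fun t => Nat.casesOn t u0 u) :=
          Valpha_le hα hM ⟨_, _, hadm', rfl⟩
      _ = g (y0, u0) + α * discountedCost g α y u := this
  have h2 : (Valpha Y U f g α y0 - g (y0, u0)) / α ≤ Valpha Y U f g α (f (y0, u0)) := by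
    rw [Valpha_eq_sInf (f (y0, u0))]
    refine le_csInf (costSet_nonempty hA2 hy1) (fun r hr => ?_)
    rw [div_le_iff₀ hα.1]
    linarith [key r hr]
  have := (div_le_iff₀ hα.1).mp h2
  linarith [mul_comm α (Valpha Y U f g α (f (y0, u0)))]

lemma bellman_ge (hα : α ∈ Set.Ioo (0:ℝ) 1) {M : ℝ}
    (hM : ∀ p : E m × U0, p.1 ∈ Y → |g p| ≤ M)
    (hA2 : ∀ y ∈ Y, (Amap Y U f y).Nonempty)
    {y0 : E m} (hy0 : y0 ∈ Y) {ε : ℝ} (hε : 0 < ε) :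
    ∃ u0 ∈ Amap Y U f y0,
      g (y0, u0) + α * Valpha Y U f g α (f (y0, u0)) ≤ Valpha Y U f g α y0 + ε := by
  have hne := costSet_nonempty (g := g) (α := α) hA2 hy0
  have hlt : sInf (costSet Y U f g α y0) < Valpha Y U f g α y0 + ε := by
    rw [← Valpha_eq_sInf]; linarith
  obtain ⟨r, hr, hrlt⟩ := exists_lt_of_csInf_lt hne hlt
  obtain ⟨y, u, hadm, rfl⟩ := hr
  have hy00 : y 0 = y0 := hadm.1
  have h0 := hadm.2 0
  have hu0Y : u 0 ∈ U y0 := hy00 ▸ h0.2.2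
  have hfY : f (y0, u 0) ∈ Y := by
    rw [← hy00, ← h0.1]
    exact (hadm.2 1).2.1
  refine ⟨u 0, ⟨hu0Y, hfY⟩, ?_⟩
  have htail := adm_tail hadm
  have hy' : ∀ t, y t ∈ Y := fun t => (hadm.2 t).2.1
  have hdec := cost_decomp hα hM (u := u) hy'
  have hVle : Valpha Y U f g α (y 1) ≤ discountedCost g α (fun t => y (t+1)) (fun t => u (t+1)) :=
    Valpha_le hα hM ⟨_, _, htail, rfl⟩
  have hy1 : f (y0, u 0) = y 1 := by rw [← hy00]; exact h0.1.symm
  rw [hy1]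
  have : g (y0, u 0) = g (y 0, u 0) := by rw [hy00]
  rw [this]
  nlinarith [hα.1]

lemma graphG_nonempty (hA2 : ∀ y ∈ Y, (Amap Y U f y).Nonempty) {y0 : E m} (hy0 : y0 ∈ Y) :
    (graphG Y U f).Nonempty := by
  obtain ⟨u, hu⟩ := hA2 y0 hy0
  exact ⟨(y0, u), hy0, hu.1, hu.2⟩

def muSet (Y : Set (E m)) (U : E m → Set U0) (f : E m × U0 → E m) (g : E m × U0 → ℝ)
    (α : ℝ) (y0 : E m) (ψ : E m → ℝ) : Set ℝ :=
  {s : ℝ | ∃ p ∈ graphG Y U f,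
    s = g p + α * (ψ (f p) - ψ p.1) + (1 - α) * (ψ y0 - ψ p.1)}

lemma muA_V (hα : α ∈ Set.Ioo (0:ℝ) 1) {M : ℝ}
    (hM : ∀ p : E m × U0, p.1 ∈ Y → |g p| ≤ M)
    (hA2 : ∀ y ∈ Y, (Amap Y U f y).Nonempty)
    {y0 : E m} (hy0 : y0 ∈ Y) :
    muA Y U f g α y0 (Valpha Y U f g α) = (1 - α) * Valpha Y U f g α y0 := by
  set V := Valpha Y U f g α with hV
  have hlb : ∀ s ∈ muSet Y U f g α y0 V, (1 - α) * V y0 ≤ s := by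
    rintro s ⟨p, hp, rfl⟩
    have hu : p.2 ∈ Amap Y U f p.1 := ⟨hp.2.1, hp.2.2⟩
    have hb := bellman_le hα hM hA2 hp.1 hu
    have hgp : g (p.1, p.2) = g p := by rw [Prod.mk.eta]
    have hfp : f (p.1, p.2) = f p := by rw [Prod.mk.eta]
    rw [hgp, hfp] at hb
    nlinarith [hb]
  have hub : ∀ ε : ℝ, 0 < ε → ∃ s ∈ muSet Y U f g α y0 V, s ≤ (1 - α) * V y0 + ε := by
    intro ε hε
    obtain ⟨u0, hu0, hle⟩ := bellman_ge hα hM hA2 hy0 hε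
    refine ⟨_, ⟨(y0, u0), ⟨hy0, hu0.1, hu0.2⟩, rfl⟩, ?_⟩
    simp only
    nlinarith [hle]
  have hmu : muA Y U f g α y0 V = sInf (muSet Y U f g α y0 V) := rfl
  rw [hmu]
  obtain ⟨s1, hs1, _⟩ := hub 1 one_pos
  refine le_antisymm ?_ (le_csInf ⟨s1, hs1⟩ hlb)
  refine le_of_forall_pos_le_add (fun ε hε => ?_)
  obtain ⟨s, hs, hsle⟩ := hub ε hε
  exact (csInf_le ⟨(1 - α) * V y0, hlb⟩ hs).trans hsle


lemma isClosed_graphG (hYc : IsCompact Y) (hUusc : UscOn Y U)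
    (hUcomp : ∀ y ∈ Y, IsCompact (U y)) (hf : Continuous f) :
    IsClosed (graphG Y U f) := by
  have hYcl : IsClosed Y := hYc.isClosed
  refine IsSeqClosed.isClosed (fun pk p hpk hlim => ?_)
  have h1 : Tendsto (fun k => (pk k).1) atTop (𝓝 p.1) :=
    (continuous_fst.tendsto p).comp hlim
  have h2 : Tendsto (fun k => (pk k).2) atTop (𝓝 p.2) :=
    (continuous_snd.tendsto p).comp hlim
  have hp1 : p.1 ∈ Y := hYcl.mem_of_tendsto h1 (Eventually.of_forall fun k => (hpk k).1)
  have hfp : f p ∈ Y := hYcl.mem_of_tendsto ((hf.tendsto p).comp hlim)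
    (Eventually.of_forall fun k => (hpk k).2.2)
  refine ⟨hp1, ?_, hfp⟩
  by_contra hcon
  rcases (U p.1).eq_empty_or_nonempty with hemp | hne
  · obtain ⟨O, hO, hpO, hOV⟩ := hUusc p.1 hp1 ∅ isOpen_empty (by rw [hemp])
    have : ∀ᶠ k in atTop, (pk k).1 ∈ O := h1.eventually (hO.eventually_mem hpO)
    obtain ⟨k, hk⟩ := this.exists
    exact hOV _ ⟨hk, (hpk k).1⟩ (hpk k).2.1
  · have hKcl : IsClosed (U p.1) := (hUcomp p.1 hp1).isClosed
    have hδ : 0 < Metric.infDist p.2 (U p.1) :=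
      (hKcl.notMem_iff_infDist_pos hne).mp hcon
    set δ := Metric.infDist p.2 (U p.1) with hδdef
    have hVopen : IsOpen {u : U0 | Metric.infDist u (U p.1) < δ / 2} :=
      isOpen_lt (Metric.continuous_infDist_pt (U p.1)) continuous_const
    have hKV : U p.1 ⊆ {u : U0 | Metric.infDist u (U p.1) < δ / 2} := fun u hu => by
      simp only [mem_setOf_eq, Metric.infDist_zero_of_mem hu]
      linarith
    obtain ⟨O, hO, hpO, hOV⟩ := hUusc p.1 hp1 _ hVopen hKV
    have hev : ∀ᶠ k in atTop, Metric.infDist (pk k).2 (U p.1) < δ / 2 := by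
      filter_upwards [h1.eventually (hO.eventually_mem hpO)] with k hk
      exact hOV _ ⟨hk, (hpk k).1⟩ (hpk k).2.1
    have hlim2 : Tendsto (fun k => Metric.infDist (pk k).2 (U p.1)) atTop (𝓝 δ) :=
      ((Metric.continuous_infDist_pt (U p.1)).tendsto p.2).comp h2
    have : δ ≤ δ / 2 := le_of_tendsto hlim2 (hev.mono fun k hk => hk.le)
    linarith

lemma adm_mem_graphG {y0 : E m} {y : ℕ → E m} {u : ℕ → U0}
    (h : AdmProc Y U f y0 y u) (t : ℕ) : (y t, u t) ∈ graphG Y U f := by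
  refine ⟨(h.2 t).2.1, (h.2 t).2.2, ?_⟩
  have := (h.2 t).1
  show f (y t, u t) ∈ Y
  rw [← this]
  exact (h.2 (t + 1)).2.1

lemma Valpha_lsc [CompactSpace U0] (hYc : IsCompact Y) (hUusc : UscOn Y U)
    (hUcomp : ∀ y ∈ Y, IsCompact (U y)) (hf : Continuous f) (hg : Continuous g)
    (hα : α ∈ Set.Ioo (0:ℝ) 1) {M : ℝ}
    (hM : ∀ p : E m × U0, p.1 ∈ Y → |g p| ≤ M)
    (hA2 : ∀ y ∈ Y, (Amap Y U f y).Nonempty) :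
    LowerSemicontinuousOn (Valpha Y U f g α) Y := by
  have hG : IsClosed (graphG Y U f) := isClosed_graphG hYc hUusc hUcomp hf
  intro x hx c hc
  by_contra hcon
  rw [Filter.not_eventually] at hcon
  obtain ⟨z, hz_tendsto, hz⟩ := exists_seq_forall_of_frequently hcon
  rw [tendsto_nhdsWithin_iff] at hz_tendsto
  obtain ⟨hz_x, hz_mem⟩ := hz_tendsto
  obtain ⟨K0, hK0⟩ := eventually_atTop.mp hz_mem
  set w : ℕ → E m := fun k => z (k + K0) with hw
  have hwY : ∀ k, w k ∈ Y := fun k => hK0 _ (Nat.le_add_left _ _)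
  have hwx : Tendsto w atTop (𝓝 x) := hz_x.comp (tendsto_add_atTop_nat K0)
  have hwV : ∀ k, Valpha Y U f g α (w k) ≤ c := fun k => not_lt.mp (hz (k + K0))
  have hchoice : ∀ k : ℕ, ∃ y u, AdmProc Y U f (w k) y u ∧
      discountedCost g α y u < c + ((k : ℝ) + 1)⁻¹ := by
    intro k
    have hpos : (0:ℝ) < ((k : ℝ) + 1)⁻¹ := by positivity
    have hlt : sInf (costSet Y U f g α (w k)) < c + ((k : ℝ) + 1)⁻¹ := by
      rw [← Valpha_eq_sInf]
      have := hwV k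
      linarith
    obtain ⟨r, hr, hrlt⟩ := exists_lt_of_csInf_lt (costSet_nonempty hA2 (hwY k)) hlt
    obtain ⟨y, u, hadm, rfl⟩ := hr
    exact ⟨y, u, hadm, hrlt⟩
  choose Yk Uk hadm hcost using hchoice
  -- sequential compactness in the product space
  have hScomp : IsCompact (Set.pi (univ : Set ℕ) fun _ : ℕ => Y ×ˢ (univ : Set U0)) :=
    isCompact_univ_pi fun _ => hYc.prod isCompact_univ
  have hseqcomp := hScomp.isSeqCompact (x := fun k => (fun t => (Yk k t, Uk k t)))
    (fun k => by
      intro t _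
      exact ⟨(hadm k).2 t |>.2.1, mem_univ _⟩)
  obtain ⟨zz, hzzS, φ, hφ, hconv⟩ := hseqcomp
  have hpt : ∀ t : ℕ, Tendsto (fun k => (Yk (φ k) t, Uk (φ k) t)) atTop (𝓝 (zz t)) :=
    fun t => ((continuous_apply t).tendsto zz).comp hconv
  set yb : ℕ → E m := fun t => (zz t).1 with hyb
  set ub : ℕ → U0 := fun t => (zz t).2 with hub
  have hGt : ∀ t, zz t ∈ graphG Y U f := by
    intro t
    refine hG.mem_of_tendsto (hpt t) (Eventually.of_forall fun k => ?_)
    exact adm_mem_graphG (hadm (φ k)) t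
  have hyb0 : yb 0 = x := by
    have l1 : Tendsto (fun k => Yk (φ k) 0) atTop (𝓝 (yb 0)) :=
      (continuous_fst.tendsto (zz 0)).comp (hpt 0)
    have l2 : Tendsto (fun k => Yk (φ k) 0) atTop (𝓝 x) := by
      have : (fun k => Yk (φ k) 0) = fun k => w (φ k) := by
        funext k
        exact (hadm (φ k)).1
      rw [this]
      exact hwx.comp hφ.tendsto_atTop
    exact tendsto_nhds_unique l1 l2
  have hstep : ∀ t, yb (t + 1) = f (yb t, ub t) := by
    intro t
    have l1 : Tendsto (fun k => Yk (φ k) (t + 1)) atTop (𝓝 (yb (t + 1))) :=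
      (continuous_fst.tendsto (zz (t + 1))).comp (hpt (t + 1))
    have l2 : Tendsto (fun k => Yk (φ k) (t + 1)) atTop (𝓝 (f (zz t))) := by
      have : (fun k => Yk (φ k) (t + 1)) = fun k => f (Yk (φ k) t, Uk (φ k) t) := by
        funext k
        exact ((hadm (φ k)).2 t).1
      rw [this]
      exact (hf.tendsto (zz t)).comp (hpt t)
    have := tendsto_nhds_unique l1 l2
    rwa [← Prod.mk.eta (p := zz t)] at this
  have hadmb : AdmProc Y U f x yb ub :=
    ⟨hyb0, fun t => ⟨hstep t, (hGt t).1, (hGt t).2.1⟩⟩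
  -- cost convergence
  have hcost_tendsto : Tendsto (fun k => discountedCost g α (Yk (φ k)) (Uk (φ k))) atTop
      (𝓝 (discountedCost g α yb ub)) := by
    refine tendsto_tsum_of_dominated_convergence
      (f := fun k t => α ^ t * g (Yk (φ k) t, Uk (φ k) t))
      (bound := fun t : ℕ => M * α ^ t)
      ((summable_geometric_of_lt_one hα.1.le hα.2).mul_left M) (fun t => ?_) ?_
    · exact (((hg.tendsto (zz t)).comp (hpt t)).const_mul _)
    · refine Eventually.of_forall fun k t => ?_
      rw [Real.norm_eq_abs, abs_mul, abs_pow, abs_of_pos hα.1, mul_comm]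
      exact mul_le_mul_of_nonneg_right
        (hM _ (((hadm (φ k)).2 t).2.1)) (pow_nonneg hα.1.le t)
  have hrhs : Tendsto (fun k : ℕ => c + ((k : ℝ) + 1)⁻¹) atTop (𝓝 c) := by
    have h0 : Tendsto (fun k : ℕ => ((k : ℝ) + 1)⁻¹) atTop (𝓝 0) := by
      simpa [one_div] using tendsto_one_div_add_atTop_nhds_zero_nat (𝕜 := ℝ)
    simpa using tendsto_const_nhds.add h0
  have hcostle : discountedCost g α yb ub ≤ c := by
    refine le_of_tendsto_of_tendsto hcost_tendsto hrhs (Eventually.of_forall fun k => ?_)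
    have h1 := (hcost (φ k)).le
    have hle : (k : ℝ) ≤ (φ k : ℝ) := Nat.cast_le.mpr hφ.le_apply
    have h2 : ((φ k : ℝ) + 1)⁻¹ ≤ ((k : ℝ) + 1)⁻¹ := by
      apply inv_anti₀ (by positivity)
      linarith
    calc discountedCost g α (Yk (φ k)) (Uk (φ k)) ≤ c + ((φ k : ℝ) + 1)⁻¹ := h1
      _ ≤ c + ((k : ℝ) + 1)⁻¹ := by linarith
  have hVx : Valpha Y U f g α x ≤ c :=
    (Valpha_le hα hM ⟨yb, ub, hadmb, rfl⟩).trans hcostle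
  exact absurd hc (not_lt.mpr hVx)

section Occ
variable [MeasurableSpace U0] [BorelSpace U0]

lemma measurable_indicator_countable {X : Type*} [MeasurableSpace X]
    [MeasurableSingletonClass X] {D : Set X} (hD : D.Countable) (h : X → ℝ) :
    Measurable (D.indicator h) := by
  classical
  intro s hs
  have : D.indicator h ⁻¹' s
      = (D ∩ h ⁻¹' s) ∪ (Dᶜ ∩ (if (0:ℝ) ∈ s then univ else (∅ : Set X))) := by
    ext x
    by_cases hx : x ∈ D
    · simp [Set.indicator_of_mem hx, hx]
    · simp only [Set.mem_preimage, Set.indicator_of_notMem hx, Set.mem_union,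
        Set.mem_inter_iff, hx, Set.mem_compl_iff, not_false_iff, true_and, false_and,
        false_or]
      split_ifs with h0 <;> simp [h0]
    
  rw [this]
  refine MeasurableSet.union ((hD.mono inter_subset_left).measurableSet) ?_
  exact (hD.measurableSet.compl).inter (by split_ifs <;> simp)

lemma aesm_of_countable_support {X : Type*} [MeasurableSpace X]
    [MeasurableSingletonClass X] {μ : Measure X} {D : Set X} (hD : D.Countable)
    (hDfull : μ Dᶜ = 0) (h : X → ℝ) : AEStronglyMeasurable h μ := by
  refine ⟨D.indicator h, (measurable_indicator_countable hD h).stronglyMeasurable, ?_⟩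
  have hae : ∀ᵐ x ∂μ, x ∈ D := by
    rw [ae_iff]
    exact hDfull
  filter_upwards [hae] with x hx
  exact (Set.indicator_of_mem hx h).symm

lemma discOcc_range_compl (hα : α ∈ Set.Ioo (0:ℝ) 1) (y : ℕ → E m) (u : ℕ → U0) :
    discOcc α y u (Set.range fun t => (y t, u t))ᶜ = 0 := by
  have hD : MeasurableSet (Set.range fun t : ℕ => (y t, u t)) :=
    (Set.countable_range _).measurableSet
  rw [discOcc, Measure.sum_apply _ hD.compl]
  have : ∀ t : ℕ, (ENNReal.ofReal ((1 - α) * α ^ t) • Measure.dirac (y t, u t))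
      (Set.range fun t : ℕ => (y t, u t))ᶜ = 0 := by
    intro t
    rw [Measure.smul_apply, Measure.dirac_apply' _ hD.compl,
      Set.indicator_of_notMem (Set.notMem_compl_iff.mpr (Set.mem_range_self t))]
    simp
  simp [this]

lemma discOcc_univ (hα : α ∈ Set.Ioo (0:ℝ) 1) (y : ℕ → E m) (u : ℕ → U0) :
    discOcc α y u Set.univ = 1 := by
  rw [discOcc, Measure.sum_apply _ MeasurableSet.univ]
  have h1 : ∀ t : ℕ, (ENNReal.ofReal ((1 - α) * α ^ t) • Measure.dirac (y t, u t)) Set.univ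
      = ENNReal.ofReal ((1 - α) * α ^ t) := by
    intro t
    simp
  simp only [h1]
  rw [← ENNReal.ofReal_tsum_of_nonneg
    (fun t => mul_nonneg (by linarith [hα.2]) (pow_nonneg hα.1.le t))
    ((summable_geometric_of_lt_one hα.1.le hα.2).mul_left _)]
  rw [tsum_mul_left, tsum_geometric_of_lt_one hα.1.le hα.2,
    mul_inv_cancel₀ (by linarith [hα.2] : (1:ℝ) - α ≠ 0), ENNReal.ofReal_one]

lemma discOcc_isProb (hα : α ∈ Set.Ioo (0:ℝ) 1) (y : ℕ → E m) (u : ℕ → U0) :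
    IsProbabilityMeasure (discOcc α y u) := ⟨discOcc_univ hα y u⟩

lemma integrable_discOcc (hα : α ∈ Set.Ioo (0:ℝ) 1) {y : ℕ → E m} {u : ℕ → U0}
    {h : E m × U0 → ℝ} {C : ℝ}
    (hmeas : AEStronglyMeasurable h (discOcc α y u))
    (hbound : ∀ t, |h (y t, u t)| ≤ C) : Integrable h (discOcc α y u) := by
  haveI := discOcc_isProb hα y u
  refine Integrable.mono' (integrable_const C) hmeas ?_
  have hae : ∀ᵐ p ∂(discOcc α y u), p ∈ Set.range fun t => (y t, u t) := by
    rw [ae_iff]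
    exact discOcc_range_compl hα y u
  filter_upwards [hae] with p hp
  obtain ⟨t, rfl⟩ := hp
  simpa [Real.norm_eq_abs] using hbound t

lemma integral_discOcc (hα : α ∈ Set.Ioo (0:ℝ) 1) {y : ℕ → E m} {u : ℕ → U0}
    {h : E m × U0 → ℝ} (hint : Integrable h (discOcc α y u)) :
    ∫ p, h p ∂(discOcc α y u) = ∑' t : ℕ, (1 - α) * α ^ t * h (y t, u t) := by
  rw [discOcc] at hint ⊢
  rw [integral_sum_measure hint]
  congr 1 with t
  rw [integral_smul_measure, integral_dirac,
    ENNReal.toReal_ofReal (mul_nonneg (by linarith [hα.2]) (pow_nonneg hα.1.le t))]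
  simp [smul_eq_mul, mul_assoc]

end Occ

lemma summable_pow_mul (hα : α ∈ Set.Ioo (0:ℝ) 1) {b : ℕ → ℝ} {C : ℝ}
    (hb : ∀ t, |b t| ≤ C) : Summable (fun t : ℕ => α ^ t * b t) := by
  refine ((summable_geometric_of_lt_one hα.1.le hα.2).mul_left C).of_norm_bounded (fun t => ?_)
  rw [Real.norm_eq_abs, abs_mul, abs_pow, abs_of_pos hα.1, mul_comm]
  exact mul_le_mul_of_nonneg_right (hb t) (pow_nonneg hα.1.le t)

section Occ2
variable [MeasurableSpace U0] [BorelSpace U0]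

lemma discOcc_graphG_compl (hα : α ∈ Set.Ioo (0:ℝ) 1) {y0 : E m}
    {y : ℕ → E m} {u : ℕ → U0} (hadm : AdmProc Y U f y0 y u) :
    discOcc α y u (graphG Y U f)ᶜ = 0 := by
  refine measure_mono_null ?_ (discOcc_range_compl hα y u)
  refine compl_subset_compl.mpr ?_
  rintro p ⟨t, rfl⟩
  exact adm_mem_graphG hadm t

lemma discOcc_test_integral (hYc : IsCompact Y) (hα : α ∈ Set.Ioo (0:ℝ) 1) {y0 : E m}
    {y : ℕ → E m} {u : ℕ → U0} (hadm : AdmProc Y U f y0 y u) (hy0 : y0 ∈ Y)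
    {φ : E m → ℝ} (hφ : ContinuousOn φ Y) :
    ∫ p, (α * (φ (f p) - φ p.1) + (1 - α) * (φ y0 - φ p.1)) ∂(discOcc α y u) = 0 := by
  obtain ⟨C, hC⟩ := hYc.exists_bound_of_continuousOn hφ
  simp only [Real.norm_eq_abs] at hC
  have hyY : ∀ t, y t ∈ Y := fun t => (hadm.2 t).2.1
  set h : E m × U0 → ℝ :=
    fun p => α * (φ (f p) - φ p.1) + (1 - α) * (φ y0 - φ p.1) with hh
  have hb1 : 0 < 1 - α := by linarith [hα.2]
  have hbound : ∀ t, |h (y t, u t)| ≤ C + C := by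
    intro t
    have hfre : f (y t, u t) = y (t + 1) := ((hadm.2 t).1).symm
    have h1 : |φ (y (t + 1))| ≤ C := hC _ (hyY (t + 1))
    have h2 : |φ (y t)| ≤ C := hC _ (hyY t)
    have h3 : |φ y0| ≤ C := hC _ hy0
    calc |h (y t, u t)|
        ≤ |α * (φ (f (y t, u t)) - φ (y t))| + |(1 - α) * (φ y0 - φ (y t))| := abs_add_le _ _
      _ = α * |φ (f (y t, u t)) - φ (y t)| + (1 - α) * |φ y0 - φ (y t)| := by
          rw [abs_mul, abs_mul, abs_of_pos hα.1, abs_of_pos hb1]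
      _ ≤ α * (C + C) + (1 - α) * (C + C) := by
          rw [hfre]
          exact add_le_add
            (mul_le_mul_of_nonneg_left ((abs_sub _ _).trans (add_le_add h1 h2)) hα.1.le)
            (mul_le_mul_of_nonneg_left ((abs_sub _ _).trans (add_le_add h3 h2)) hb1.le)
      _ = C + C := by ring
  have hmeas : AEStronglyMeasurable h (discOcc α y u) :=
    aesm_of_countable_support (Set.countable_range _) (discOcc_range_compl hα y u) h
  have hint : Integrable h (discOcc α y u) := integrable_discOcc hα hmeas hbound
  rw [integral_discOcc hα hint]
  -- telescoping
  set a : ℕ → ℝ := fun t => α ^ t * φ (y t) with ha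
  have hsa : Summable a := summable_pow_mul hα (fun t => hC _ (hyY t))
  have hsa1 : Summable (fun t => a (t + 1)) := (summable_nat_add_iff 1).mpr hsa
  have hterm : ∀ t : ℕ, (1 - α) * α ^ t * h (y t, u t)
      = (1 - α) * (a (t + 1) - a t) + ((1 - α) * ((1 - α) * φ y0)) * α ^ t := by
    intro t
    have hfre : f (y t, u t) = y (t + 1) := ((hadm.2 t).1).symm
    simp only [hh, hfre, ha]
    ring
  rw [tsum_congr hterm]
  have hs1 : Summable (fun t => (1 - α) * (a (t + 1) - a t)) := ((hsa1.sub hsa).mul_left _)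
  have hs2 : Summable (fun t : ℕ => ((1 - α) * ((1 - α) * φ y0)) * α ^ t) :=
    (summable_geometric_of_lt_one hα.1.le hα.2).mul_left _
  rw [Summable.tsum_add hs1 hs2, tsum_mul_left, Summable.tsum_sub hsa1 hsa, tsum_mul_left,
    tsum_geometric_of_lt_one hα.1.le hα.2]
  have hshift : ∑' t, a (t + 1) = (∑' t, a t) - a 0 := by
    have := Summable.tsum_eq_zero_add hsa
    linarith
  have ha0 : a 0 = φ y0 := by
    simp only [ha, pow_zero, one_mul]
    rw [hadm.1]
  rw [hshift, ha0]
  field_simp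
  ring

lemma discOcc_integral_g (hα : α ∈ Set.Ioo (0:ℝ) 1) {M : ℝ}
    (hM : ∀ p : E m × U0, p.1 ∈ Y → |g p| ≤ M) (hg : Continuous g)
    {y0 : E m} {y : ℕ → E m} {u : ℕ → U0} (hadm : AdmProc Y U f y0 y u) :
    ∫ p, g p ∂(discOcc α y u) = (1 - α) * discountedCost g α y u := by
  have hint : Integrable g (discOcc α y u) :=
    integrable_discOcc hα hg.aestronglyMeasurable (fun t => hM _ ((hadm.2 t).2.1))
  rw [integral_discOcc hα hint, discountedCost, ← tsum_mul_left]
  congr 1 with t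
  ring

end Occ2

lemma lsc_approx (hYne : Y.Nonempty) {ψ : E m → ℝ} {C : ℝ}
    (hlsc : LowerSemicontinuousOn ψ Y) (hC : ∀ z ∈ Y, |ψ z| ≤ C) :
    ∃ φn : ℕ → E m → ℝ,
      (∀ n, Continuous (φn n)) ∧
      (∀ z, Monotone (fun n => φn n z)) ∧
      (∀ n z, -C ≤ φn n z) ∧
      (∀ n, ∀ z ∈ Y, φn n z ≤ ψ z) ∧
      (∀ z ∈ Y, Tendsto (fun n => φn n z) atTop (𝓝 (ψ z))) := by
  set Φ : ℕ → E m → ℝ := fun n z => sInf ((fun w => ψ w + n * dist z w) '' Y) with hΦ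
  have hne : ∀ (n : ℕ) (z : E m), ((fun w => ψ w + (n:ℝ) * dist z w) '' Y).Nonempty :=
    fun n z => hYne.image _
  have hlb : ∀ (n : ℕ) (z : E m), ∀ s ∈ (fun w => ψ w + (n:ℝ) * dist z w) '' Y, -C ≤ s := by
    rintro n z s ⟨w, hw, rfl⟩
    dsimp only
    have h1 := neg_le_of_abs_le (hC w hw)
    have h2 : (0:ℝ) ≤ (n:ℝ) * dist z w := by positivity
    linarith
  have hbdd : ∀ (n : ℕ) (z : E m), BddBelow ((fun w => ψ w + (n:ℝ) * dist z w) '' Y) :=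
    fun n z => ⟨-C, hlb n z⟩
  have hle : ∀ (n : ℕ) (z : E m), ∀ w ∈ Y, Φ n z ≤ ψ w + (n:ℝ) * dist z w :=
    fun n z w hw => csInf_le (hbdd n z) ⟨w, hw, rfl⟩
  have hlbΦ : ∀ (n : ℕ) (z : E m), -C ≤ Φ n z := fun n z => le_csInf (hne n z) (hlb n z)
  have hY : ∀ n, ∀ z ∈ Y, Φ n z ≤ ψ z := by
    intro n z hz
    have := hle n z z hz
    rwa [dist_self, mul_zero, add_zero] at this
  have hmono : ∀ z : E m, Monotone (fun n => Φ n z) := by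
    intro z n1 n2 h12
    refine le_csInf (hne n2 z) ?_
    rintro s ⟨w, hw, rfl⟩
    dsimp only
    have h1 := hle n1 z w hw
    have h2 : (n1:ℝ) * dist z w ≤ (n2:ℝ) * dist z w :=
      mul_le_mul_of_nonneg_right (Nat.cast_le.mpr h12) dist_nonneg
    linarith
  have hlip : ∀ (n : ℕ) (z1 z2 : E m), Φ n z1 ≤ Φ n z2 + (n:ℝ) * dist z1 z2 := by
    intro n z1 z2
    have : Φ n z1 - (n:ℝ) * dist z1 z2 ≤ Φ n z2 := by
      refine le_csInf (hne n z2) ?_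
      rintro s ⟨w, hw, rfl⟩
      dsimp only
      have h1 := hle n z1 w hw
      have h2 : dist z1 w ≤ dist z1 z2 + dist z2 w := dist_triangle _ _ _
      have h3 : (n:ℝ) * dist z1 w ≤ (n:ℝ) * (dist z1 z2 + dist z2 w) :=
        mul_le_mul_of_nonneg_left h2 (Nat.cast_nonneg n)
      have h4 : (n:ℝ) * (dist z1 z2 + dist z2 w) = n * dist z1 z2 + n * dist z2 w := by ring
      linarith
    linarith
  have hcont : ∀ n, Continuous (Φ n) := by
    intro n
    refine LipschitzWith.continuous (K := n) (LipschitzWith.of_dist_le_mul fun z1 z2 => ?_)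
    rw [Real.dist_eq, abs_le]
    push_cast
    have h1 := hlip n z1 z2
    have h2 := hlip n z2 z1
    rw [dist_comm z2 z1] at h2
    constructor
    · linarith
    · linarith
  refine ⟨Φ, hcont, hmono, hlbΦ, hY, ?_⟩
  intro z hz
  have hbddA : BddAbove (Set.range fun n => Φ n z) := by
    refine ⟨ψ z, ?_⟩
    rintro _ ⟨n, rfl⟩
    exact hY n z hz
  have hlim := tendsto_atTop_ciSup (hmono z) hbddA
  set L := ⨆ n, Φ n z with hL
  have hLle : L ≤ ψ z := ciSup_le fun n => hY n z hz
  rcases eq_or_lt_of_le hLle with heq | hlt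
  · rwa [heq] at hlim
  exfalso
  have hwit : ∀ n : ℕ, ∃ w ∈ Y, ψ w + (n:ℝ) * dist z w < L + ((n:ℝ) + 1)⁻¹ := by
    intro n
    have h1 : Φ n z ≤ L := le_ciSup hbddA n
    have h2 : sInf ((fun w => ψ w + n * dist z w) '' Y) < L + ((n:ℝ) + 1)⁻¹ := by
      have : (0:ℝ) < ((n:ℝ) + 1)⁻¹ := by positivity
      have h3 : Φ n z < L + ((n:ℝ) + 1)⁻¹ := by linarith
      exact h3
    obtain ⟨s, hs, hslt⟩ := exists_lt_of_csInf_lt (hne n z) h2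
    obtain ⟨w, hw, rfl⟩ := hs
    exact ⟨w, hw, hslt⟩
  choose w hwY hwlt using hwit
  have hinv1 : ∀ n : ℕ, ((n:ℝ) + 1)⁻¹ ≤ 1 := by
    intro n
    have h1 : (1:ℝ) ≤ (n:ℝ) + 1 := by
      have : (0:ℝ) ≤ (n:ℝ) := Nat.cast_nonneg n
      linarith
    exact inv_le_one_of_one_le₀ h1
  have hdist : ∀ n : ℕ, (n:ℝ) * dist z (w n) ≤ L + 1 + C := by
    intro n
    have h1 := hwlt n
    have h2 := neg_le_of_abs_le (hC (w n) (hwY n))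
    have h3 := hinv1 n
    linarith
  have hwz : Tendsto w atTop (𝓝 z) := by
    rw [tendsto_iff_dist_tendsto_zero]
    refine squeeze_zero' (Eventually.of_forall fun n => dist_nonneg) ?_
      (tendsto_const_div_atTop_nhds_zero_nat (L + 1 + C))
    filter_upwards [eventually_ge_atTop 1] with n hn
    have hnpos : (0:ℝ) < (n:ℝ) := by exact_mod_cast hn
    rw [dist_comm]
    exact (le_div_iff₀ hnpos).mpr (by linarith [hdist n])
  have hwzY : Tendsto w atTop (𝓝[Y] z) :=
    tendsto_nhdsWithin_of_tendsto_nhds_of_eventually_within _ hwz (Eventually.of_forall hwY)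
  set c' := (L + ψ z) / 2 with hc'
  have h1 : ∀ᶠ n in atTop, c' < ψ (w n) := hwzY.eventually (hlsc z hz c' (by rw [hc']; linarith))
  have h2 : ∀ᶠ n : ℕ in atTop, ((n:ℝ) + 1)⁻¹ < c' - L := by
    have h0 : Tendsto (fun n : ℕ => ((n:ℝ) + 1)⁻¹) atTop (𝓝 0) := by
      simpa [one_div] using tendsto_one_div_add_atTop_nhds_zero_nat (𝕜 := ℝ)
    exact h0.eventually_lt_const (by rw [hc']; linarith : (0:ℝ) < c' - L)
  obtain ⟨n, hn1, hn2⟩ := (h1.and h2).exists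
  have h3 := hwlt n
  have h4 : (0:ℝ) ≤ (n:ℝ) * dist z (w n) := by positivity
  linarith

section WeakDuality
variable [MeasurableSpace U0] [BorelSpace U0]

lemma muSet_lb {y0 : E m} {ψ : E m → ℝ} {M C : ℝ}
    (hM : ∀ p : E m × U0, p.1 ∈ Y → |g p| ≤ M) (hψC : ∀ z ∈ Y, |ψ z| ≤ C)
    (hα : α ∈ Set.Ioo (0:ℝ) 1) (hy0 : y0 ∈ Y) :
    ∀ s ∈ muSet Y U f g α y0 ψ, -(M + (C + C)) ≤ s := by
  rintro s ⟨p, hp, rfl⟩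
  have h1 := neg_le_of_abs_le (hM p hp.1)
  obtain ⟨ha1, ha2⟩ := abs_le.mp (hψC _ hp.2.2)
  obtain ⟨hb1, hb2⟩ := abs_le.mp (hψC _ hp.1)
  obtain ⟨hc1, hc2⟩ := abs_le.mp (hψC _ hy0)
  have e1 : -(C + C) ≤ ψ (f p) - ψ p.1 := by linarith
  have e2 : -(C + C) ≤ ψ y0 - ψ p.1 := by linarith
  have e3 : α * (-(C + C)) ≤ α * (ψ (f p) - ψ p.1) := mul_le_mul_of_nonneg_left e1 hα.1.le
  have e4 : (1 - α) * (-(C + C)) ≤ (1 - α) * (ψ y0 - ψ p.1) :=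
    mul_le_mul_of_nonneg_left e2 (by linarith [hα.2])
  have e5 : α * (-(C + C)) + (1 - α) * (-(C + C)) = -(C + C) := by ring
  linarith

lemma split_integral {ν : Measure (E m × U0)} [IsProbabilityMeasure ν]
    {A B : E m × U0 → ℝ} (hA : Integrable A ν) (hB : Integrable B ν) (c β : ℝ) :
    ∫ p, (β * (A p - B p) + (1 - β) * (c - B p)) ∂ν
      = β * ∫ p, A p ∂ν + (1 - β) * c - ∫ p, B p ∂ν := by
  have h1 : Integrable (fun p => β * (A p - B p)) ν := (hA.sub hB).const_mul β
  have h2 : Integrable (fun p => (1 - β) * (c - B p)) ν :=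
    ((integrable_const c).sub hB).const_mul (1 - β)
  rw [integral_add h1 h2, integral_const_mul, integral_const_mul, integral_sub hA hB,
    integral_sub (integrable_const c) hB, integral_const, probReal_univ, one_smul]
  ring

lemma weak_duality [CompactSpace U0] (hYne : Y.Nonempty) (hYc : IsCompact Y)
    (hf : Continuous f) (hg : Continuous g)
    (hα : α ∈ Set.Ioo (0:ℝ) 1) {M : ℝ} (hM : ∀ p : E m × U0, p.1 ∈ Y → |g p| ≤ M)
    {y0 : E m} (hy0 : y0 ∈ Y) {ψ : E m → ℝ} (hψ : BddLscOn Y ψ)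
    {ν : Measure (E m × U0)} [IsProbabilityMeasure ν]
    (hν0 : ν (graphG Y U f)ᶜ = 0)
    (hid : ∀ φ : E m → ℝ, ContinuousOn φ Y →
      ∫ p, (α * (φ (f p) - φ p.1) + (1 - α) * (φ y0 - φ p.1)) ∂ν = 0) :
    muA Y U f g α y0 ψ ≤ ∫ p, g p ∂ν := by
  obtain ⟨hlsc, C0, hC0⟩ := hψ
  set C := max C0 0 with hCdef
  have hCnn : (0:ℝ) ≤ C := le_max_right _ _
  have hC : ∀ z ∈ Y, |ψ z| ≤ C := fun z hz => (hC0 z hz).trans (le_max_left _ _)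
  obtain ⟨φn, hcont, hmono, hlbn, hleY, htend⟩ := lsc_approx hYne hlsc hC
  have haeG : ∀ᵐ p ∂ν, p ∈ graphG Y U f := by rw [ae_iff]; exact hν0
  set φn' : ℕ → E m → ℝ := fun n z => min (φn n z) C with hφn'
  have hcont' : ∀ n, Continuous (φn' n) := fun n => (hcont n).min continuous_const
  have hub' : ∀ n z, |φn' n z| ≤ C := by
    intro n z
    rw [abs_le]
    exact ⟨le_min (hlbn n z) (by linarith), min_le_right _ _⟩
  have hmono' : ∀ z : E m, Monotone fun n => φn' n z :=
    fun z a b hab => min_le_min (hmono z hab) le_rfl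
  set ψt : E m → ℝ := fun z => ⨆ n, φn' n z with hψt
  have hbddA : ∀ z : E m, BddAbove (Set.range fun n => φn' n z) := by
    intro z
    refine ⟨C, ?_⟩
    rintro _ ⟨n, rfl⟩
    exact (abs_le.mp (hub' n z)).2
  have htend' : ∀ z : E m, Tendsto (fun n => φn' n z) atTop (𝓝 (ψt z)) :=
    fun z => tendsto_atTop_ciSup (hmono' z) (hbddA z)
  have heqY : ∀ n, ∀ z ∈ Y, φn' n z = φn n z :=
    fun n z hz => min_eq_left ((hleY n z hz).trans ((abs_le.mp (hC z hz)).2))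
  have hψtY : ∀ z ∈ Y, ψt z = ψ z := by
    intro z hz
    refine tendsto_nhds_unique (htend' z) ((htend z hz).congr (fun n => (heqY n z hz).symm))
  have hψtabs : ∀ z, |ψt z| ≤ C := by
    intro z
    rw [abs_le]
    constructor
    · exact le_trans (abs_le.mp (hub' 0 z)).1 (le_ciSup (hbddA z) 0)
    · exact ciSup_le fun n => (abs_le.mp (hub' n z)).2
  have hψtmeas : Measurable ψt :=
    measurable_of_tendsto_metrizable (fun n => (hcont' n).measurable)
      (tendsto_pi_nhds.mpr htend')
  have hib : ∀ (h : E m × U0 → ℝ), AEStronglyMeasurable h ν → (∀ᵐ p ∂ν, |h p| ≤ C) →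
      Integrable h ν := fun h hm hb =>
    Integrable.mono' (integrable_const C) hm (hb.mono fun p hp => by rwa [Real.norm_eq_abs])
  -- integrability of the truncated pieces and limits
  have hAint : ∀ n, Integrable (fun p : E m × U0 => φn' n (f p)) ν := fun n =>
    hib _ ((hcont' n).comp hf).aestronglyMeasurable (Eventually.of_forall fun p => hub' n (f p))
  have hBint : ∀ n, Integrable (fun p : E m × U0 => φn' n p.1) ν := fun n =>
    hib _ ((hcont' n).comp continuous_fst).aestronglyMeasurable
      (Eventually.of_forall fun p => hub' n p.1)
  have hAlim : Integrable (fun p : E m × U0 => ψt (f p)) ν :=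
    hib _ ((hψtmeas.comp hf.measurable).aestronglyMeasurable)
      (Eventually.of_forall fun p => hψtabs (f p))
  have hBlim : Integrable (fun p : E m × U0 => ψt p.1) ν :=
    hib _ ((hψtmeas.comp measurable_fst).aestronglyMeasurable)
      (Eventually.of_forall fun p => hψtabs p.1)
  -- untruncated pieces are a.e. equal to truncated ones
  have hAcongr : ∀ n, (fun p : E m × U0 => φn n (f p)) =ᵐ[ν] fun p => φn' n (f p) := by
    intro n
    filter_upwards [haeG] with p hp
    exact (heqY n _ hp.2.2).symm
  have hBcongr : ∀ n, (fun p : E m × U0 => φn n p.1) =ᵐ[ν] fun p => φn' n p.1 := by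
    intro n
    filter_upwards [haeG] with p hp
    exact (heqY n _ hp.1).symm
  -- the identity for each n, in split form
  have hsplit : ∀ n, α * (∫ p, φn' n (f p) ∂ν) + (1 - α) * φn n y0
      - ∫ p, φn' n p.1 ∂ν = 0 := by
    intro n
    have h0 := hid (φn n) (hcont n).continuousOn
    have hAn : Integrable (fun p : E m × U0 => φn n (f p)) ν :=
      (integrable_congr (hAcongr n)).mpr (hAint n)
    have hBn : Integrable (fun p : E m × U0 => φn n p.1) ν :=
      (integrable_congr (hBcongr n)).mpr (hBint n)
    have e := split_integral (ν := ν) hAn hBn (φn n y0) α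
    rw [h0] at e
    rw [← integral_congr_ae (hAcongr n), ← integral_congr_ae (hBcongr n)]
    linarith [e]
  -- MCT
  have hAtend : Tendsto (fun n => ∫ p, φn' n (f p) ∂ν) atTop
      (𝓝 (∫ p, ψt (f p) ∂ν)) := by
    refine integral_tendsto_of_tendsto_of_monotone hAint hAlim ?_ ?_
    · exact Eventually.of_forall fun p => fun a b hab => hmono' (f p) hab
    · exact Eventually.of_forall fun p => htend' (f p)
  have hBtend : Tendsto (fun n => ∫ p, φn' n p.1 ∂ν) atTop
      (𝓝 (∫ p, ψt p.1 ∂ν)) := by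
    refine integral_tendsto_of_tendsto_of_monotone hBint hBlim ?_ ?_
    · exact Eventually.of_forall fun p => fun a b hab => hmono' p.1 hab
    · exact Eventually.of_forall fun p => htend' p.1
  have hctend : Tendsto (fun n => φn n y0) atTop (𝓝 (ψ y0)) := htend y0 hy0
  have hT : α * (∫ p, ψt (f p) ∂ν) + (1 - α) * ψ y0 - ∫ p, ψt p.1 ∂ν = 0 := by
    have hS : Tendsto (fun n => α * (∫ p, φn' n (f p) ∂ν) + (1 - α) * φn n y0
        - ∫ p, φn' n p.1 ∂ν) atTop
        (𝓝 (α * (∫ p, ψt (f p) ∂ν) + (1 - α) * ψ y0 - ∫ p, ψt p.1 ∂ν)) :=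
      ((hAtend.const_mul α).add (hctend.const_mul (1 - α))).sub hBtend
    have hS0 : Tendsto (fun _ : ℕ => (0:ℝ)) atTop
        (𝓝 (α * (∫ p, ψt (f p) ∂ν) + (1 - α) * ψ y0 - ∫ p, ψt p.1 ∂ν)) := by
      refine hS.congr (fun n => ?_)
      rw [hsplit n]
    exact tendsto_nhds_unique hS0 tendsto_const_nhds
  -- pointwise a.e. bound and conclusion
  have hgint : Integrable g ν :=
    Integrable.mono' (integrable_const M) hg.aestronglyMeasurable
      (haeG.mono fun p hp => by rw [Real.norm_eq_abs]; exact hM p hp.1)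
  have hrest : Integrable
      (fun p : E m × U0 => α * (ψt (f p) - ψt p.1) + (1 - α) * (ψ y0 - ψt p.1)) ν :=
    ((hAlim.sub hBlim).const_mul α).add (((integrable_const (ψ y0)).sub hBlim).const_mul (1 - α))
  have hkey : ∀ᵐ p ∂ν, muA Y U f g α y0 ψ
      ≤ g p + (α * (ψt (f p) - ψt p.1) + (1 - α) * (ψ y0 - ψt p.1)) := by
    filter_upwards [haeG] with p hp
    have hmem : (g p + α * (ψ (f p) - ψ p.1) + (1 - α) * (ψ y0 - ψ p.1))
        ∈ muSet Y U f g α y0 ψ := ⟨p, hp, rfl⟩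
    have hle : muA Y U f g α y0 ψ
        ≤ g p + α * (ψ (f p) - ψ p.1) + (1 - α) * (ψ y0 - ψ p.1) :=
      csInf_le ⟨-(M + (C + C)), muSet_lb hM hC hα hy0⟩ hmem
    rw [hψtY _ hp.2.2, hψtY _ hp.1]
    linarith
  have hsum : Integrable
      (fun p : E m × U0 => g p + (α * (ψt (f p) - ψt p.1) + (1 - α) * (ψ y0 - ψt p.1))) ν :=
    hgint.add hrest
  have hmono_int := integral_mono_ae (integrable_const (muA Y U f g α y0 ψ)) hsum hkey
  rw [integral_const, probReal_univ, one_smul,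
    integral_add hgint hrest] at hmono_int
  have hrint : ∫ p, (α * (ψt (f p) - ψt p.1) + (1 - α) * (ψ y0 - ψt p.1)) ∂ν = 0 := by
    have e := split_integral (ν := ν) hAlim hBlim (ψ y0) α
    rw [e]
    linarith [hT]
  rw [hrint] at hmono_int
  linarith [hmono_int]

end WeakDuality

theorem stmt9 {m : ℕ} {U0 : Type*} [MetricSpace U0] [CompactSpace U0]
    [MeasurableSpace U0] [BorelSpace U0]
    (Y : Set (E m)) (hYne : Y.Nonempty) (hYc : IsCompact Y)
    (U : E m → Set U0) (hUusc : UscOn Y U) (hUcomp : ∀ y ∈ Y, IsCompact (U y))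
    (f : E m × U0 → E m) (hf : Continuous f)
    (g : E m × U0 → ℝ) (hg : Continuous g)
    (hA2 : ∀ y ∈ Y, (Amap Y U f y).Nonempty)
    (α : ℝ) (hα : α ∈ Set.Ioo (0:ℝ) 1) (y0 : E m) (hy0 : y0 ∈ Y) :
    muStarA Y U f g α y0 = gStarA Y U f g α y0 ∧
    gStarA Y U f g α y0 = (1 - α) * Valpha Y U f g α y0 ∧
    BddLscOn Y (Valpha Y U f g α) ∧
    muA Y U f g α y0 (Valpha Y U f g α) = muStarA Y U f g α y0 := by
  obtain ⟨M, hM0, hM⟩ := exists_gbound hYc hg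
  have hb1 : (0:ℝ) < 1 - α := by linarith [hα.2]
  set V := Valpha Y U f g α with hVdef
  have hVlsc : LowerSemicontinuousOn V Y := Valpha_lsc hYc hUusc hUcomp hf hg hα hM hA2
  have hVbdd : BddLscOn Y V :=
    ⟨hVlsc, M * (1 - α)⁻¹, fun z hz => Valpha_abs_le hα hM hA2 hz⟩
  have hmuV : muA Y U f g α y0 V = (1 - α) * V y0 := muA_V hα hM hA2 hy0
  obtain ⟨ybase, ubase, hbase⟩ := exists_adm hA2 hy0
  haveI hP0 := discOcc_isProb hα ybase ubase
  set γ0 : ProbabilityMeasure (E m × U0) := ⟨discOcc α ybase ubase, hP0⟩ with hγ0def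
  have hγ0 : γ0 ∈ Wa Y U f α y0 :=
    ⟨discOcc_graphG_compl hα hbase, fun φ hφ => discOcc_test_integral hYc hα hbase hy0 hφ⟩
  have hMuNe : {r : ℝ | ∃ ψ, BddLscOn Y ψ ∧ r = muA Y U f g α y0 ψ}.Nonempty :=
    ⟨_, V, hVbdd, rfl⟩
  have hwd : ∀ (ψ : E m → ℝ), BddLscOn Y ψ → ∀ γ ∈ Wa Y U f α y0,
      muA Y U f g α y0 ψ ≤ ∫ p, g p ∂(γ : Measure (E m × U0)) := by
    intro ψ hψ γ hγ
    haveI := γ.prop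
    exact weak_duality hYne hYc hf hg hα hM hy0 hψ hγ.1 hγ.2
  have hgNe : {r : ℝ | ∃ γ ∈ Wa Y U f α y0,
      r = ∫ p, g p ∂(γ : Measure (E m × U0))}.Nonempty := ⟨_, γ0, hγ0, rfl⟩
  have key1 : muStarA Y U f g α y0 ≤ gStarA Y U f g α y0 := by
    refine csSup_le hMuNe ?_
    rintro r ⟨ψ, hψ, rfl⟩
    refine le_csInf hgNe ?_
    rintro r' ⟨γ, hγ, rfl⟩
    exact hwd ψ hψ γ hγ
  have hbddBelow : BddBelow {r : ℝ | ∃ γ ∈ Wa Y U f α y0,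
      r = ∫ p, g p ∂(γ : Measure (E m × U0))} := by
    refine ⟨muA Y U f g α y0 V, ?_⟩
    rintro r' ⟨γ, hγ, rfl⟩
    exact hwd V hVbdd γ hγ
  have key2 : gStarA Y U f g α y0 ≤ (1 - α) * V y0 := by
    refine le_of_forall_pos_le_add (fun ε hε => ?_)
    have hpos : 0 < ε / (1 - α) := by positivity
    have hlt : sInf (costSet Y U f g α y0) < V y0 + ε / (1 - α) := by
      rw [← Valpha_eq_sInf, ← hVdef]
      linarith
    obtain ⟨r, hr, hrlt⟩ := exists_lt_of_csInf_lt (costSet_nonempty hA2 hy0) hlt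
    obtain ⟨y, u, hadm, rfl⟩ := hr
    haveI hP := discOcc_isProb hα y u
    set γ1 : ProbabilityMeasure (E m × U0) := ⟨discOcc α y u, hP⟩ with hγ1def
    have hγ1 : γ1 ∈ Wa Y U f α y0 :=
      ⟨discOcc_graphG_compl hα hadm, fun φ hφ => discOcc_test_integral hYc hα hadm hy0 hφ⟩
    have hval : ∫ p, g p ∂(γ1 : Measure (E m × U0)) = (1 - α) * discountedCost g α y u :=
      discOcc_integral_g hα hM hg hadm
    have hmem : (1 - α) * discountedCost g α y u ∈ {r : ℝ | ∃ γ ∈ Wa Y U f α y0,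
        r = ∫ p, g p ∂(γ : Measure (E m × U0))} := ⟨γ1, hγ1, hval.symm⟩
    have hle := csInf_le hbddBelow hmem
    calc gStarA Y U f g α y0 ≤ (1 - α) * discountedCost g α y u := hle
      _ ≤ (1 - α) * (V y0 + ε / (1 - α)) := mul_le_mul_of_nonneg_left hrlt.le hb1.le
      _ = (1 - α) * V y0 + ε := by field_simp
  have hbddAbove : BddAbove {r : ℝ | ∃ ψ, BddLscOn Y ψ ∧ r = muA Y U f g α y0 ψ} := by
    refine ⟨∫ p, g p ∂(γ0 : Measure (E m × U0)), ?_⟩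
    rintro r ⟨ψ, hψ, rfl⟩
    exact hwd ψ hψ γ0 hγ0
  have key3 : (1 - α) * V y0 ≤ muStarA Y U f g α y0 := by
    rw [← hmuV]
    exact le_csSup hbddAbove ⟨V, hVbdd, rfl⟩
  have e1 : muStarA Y U f g α y0 = gStarA Y U f g α y0 :=
    le_antisymm key1 (key2.trans key3)
  have e2 : gStarA Y U f g α y0 = (1 - α) * V y0 :=
    le_antisymm key2 (key3.trans key1)
  refine ⟨e1, e2, hVbdd, ?_⟩
  rw [hmuV]
  exact (e1.trans e2).symm


end LPOC
end
end
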